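/- Let $n_1, n_2, m_3$ be integers with $n_1, n_2, m_3 \ge 2$, and let $\partial_1$ be the $2\times 6$ integer matrix $\begin{bmatrix} 1 & -2n_1 & 1 & -2n_2 & 1-2m_3 & 0 \\ -2n_1 & 1 & -2n_2 & 1 & 0 & 1-2m_3\end{bmatrix}$. Then the gcd of all $2\times 2$ minors of $\partial_1$ equals $g = \gcd(1-4n_1^2,\ 1-4n_2^2,\ 1-4n_1n_2,\ 1-2m_3)$. -/

import Mathlib

private lemma vec6_apply5 {α : Type*} (x0 x1 x2 x3 x4 x5 : α) :
    ![x0,x1,x2,x3,x4,x5] (5 : Fin 6) = x5 := rfl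

open Finset in
theorem stmt_9 (n₁ n₂ m₃ : ℤ) (h₁ : 2 ≤ n₁) (h₂ : 2 ≤ n₂) (h₃ : 2 ≤ m₃)
    (M : Matrix (Fin 2) (Fin 6) ℤ)
    (hM : M = !![1, -2*n₁, 1, -2*n₂, 1-2*m₃, 0;
                 -2*n₁, 1, -2*n₂, 1, 0, 1-2*m₃]) :
    Finset.univ.gcd (fun p : Fin 6 × Fin 6 => M 0 p.1 * M 1 p.2 - M 0 p.2 * M 1 p.1) =
    (Int.gcd (1 - 4*n₁^2) (Int.gcd (1 - 4*n₂^2) (Int.gcd (1 - 4*n₁*n₂) (1 - 2*m₃))) : ℤ) := by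
  subst hM
  set g : ℤ := (Int.gcd (1 - 4*n₁^2) (Int.gcd (1 - 4*n₂^2) (Int.gcd (1 - 4*n₁*n₂) (1 - 2*m₃))) : ℤ) with hg
  set L : ℤ := Finset.univ.gcd (fun p : Fin 6 × Fin 6 =>
    (!![1, -2*n₁, 1, -2*n₂, 1-2*m₃, 0; -2*n₁, 1, -2*n₂, 1, 0, 1-2*m₃] : Matrix (Fin 2) (Fin 6) ℤ) 0 p.1 *
    (!![1, -2*n₁, 1, -2*n₂, 1-2*m₃, 0; -2*n₁, 1, -2*n₂, 1, 0, 1-2*m₃] : Matrix (Fin 2) (Fin 6) ℤ) 1 p.2 -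
    (!![1, -2*n₁, 1, -2*n₂, 1-2*m₃, 0; -2*n₁, 1, -2*n₂, 1, 0, 1-2*m₃] : Matrix (Fin 2) (Fin 6) ℤ) 0 p.2 *
    (!![1, -2*n₁, 1, -2*n₂, 1-2*m₃, 0; -2*n₁, 1, -2*n₂, 1, 0, 1-2*m₃] : Matrix (Fin 2) (Fin 6) ℤ) 1 p.1) with hL
  have hga : g ∣ 1 - 4*n₁^2 := Int.gcd_dvd_left _ _
  have hrest : g ∣ (Int.gcd (1 - 4*n₂^2) (Int.gcd (1 - 4*n₁*n₂) (1 - 2*m₃)) : ℤ) := Int.gcd_dvd_right _ _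
  have hgb : g ∣ 1 - 4*n₂^2 := hrest.trans (Int.gcd_dvd_left _ _)
  have hrest2 : g ∣ (Int.gcd (1 - 4*n₁*n₂) (1 - 2*m₃) : ℤ) := hrest.trans (Int.gcd_dvd_right _ _)
  have hgc : g ∣ 1 - 4*n₁*n₂ := hrest2.trans (Int.gcd_dvd_left _ _)
  have hgd : g ∣ 1 - 2*m₃ := hrest2.trans (Int.gcd_dvd_right _ _)
  have h5 : g ∣ n₁ - n₂ := by
    have h := dvd_sub (hgc.mul_left n₁) (hga.mul_left n₂)
    rwa [show n₁ * (1 - 4*n₁*n₂) - n₂ * (1 - 4*n₁^2) = n₁ - n₂ by ring] at h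
  have hgl : g ∣ L := by
    apply Finset.dvd_gcd
    intro p _
    fin_cases p
    · simpa using dvd_zero g
    · exact ((hga).mul_left (1)).trans (dvd_of_eq (by simp [vec6_apply5]; try ring))
    · exact ((h5).mul_left (2)).trans (dvd_of_eq (by simp [vec6_apply5]; try ring))
    · exact ((hgc).mul_left (1)).trans (dvd_of_eq (by simp [vec6_apply5]; try ring))
    · exact ((hgd).mul_left (2*n₁)).trans (dvd_of_eq (by simp [vec6_apply5]; try ring))
    · exact ((hgd).mul_left (1)).trans (dvd_of_eq (by simp [vec6_apply5]; try ring))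
    · exact ((hga).mul_left (-(1))).trans (dvd_of_eq (by simp [vec6_apply5]; try ring))
    · simpa using dvd_zero g
    · exact ((hgc).mul_left (-1)).trans (dvd_of_eq (by simp [vec6_apply5]; try ring))
    · exact ((h5).mul_left (-2)).trans (dvd_of_eq (by simp [vec6_apply5]; try ring))
    · exact ((hgd).mul_left (-1)).trans (dvd_of_eq (by simp [vec6_apply5]; try ring))
    · exact ((hgd).mul_left (-2*n₁)).trans (dvd_of_eq (by simp [vec6_apply5]; try ring))
    · exact ((h5).mul_left (-(2))).trans (dvd_of_eq (by simp [vec6_apply5]; try ring))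
    · exact ((hgc).mul_left (-(-1))).trans (dvd_of_eq (by simp [vec6_apply5]; try ring))
    · simpa using dvd_zero g
    · exact ((hgb).mul_left (1)).trans (dvd_of_eq (by simp [vec6_apply5]; try ring))
    · exact ((hgd).mul_left (2*n₂)).trans (dvd_of_eq (by simp [vec6_apply5]; try ring))
    · exact ((hgd).mul_left (1)).trans (dvd_of_eq (by simp [vec6_apply5]; try ring))
    · exact ((hgc).mul_left (-(1))).trans (dvd_of_eq (by simp [vec6_apply5]; try ring))
    · exact ((h5).mul_left (-(-2))).trans (dvd_of_eq (by simp [vec6_apply5]; try ring))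
    · exact ((hgb).mul_left (-(1))).trans (dvd_of_eq (by simp [vec6_apply5]; try ring))
    · simpa using dvd_zero g
    · exact ((hgd).mul_left (-1)).trans (dvd_of_eq (by simp [vec6_apply5]; try ring))
    · exact ((hgd).mul_left (-2*n₂)).trans (dvd_of_eq (by simp [vec6_apply5]; try ring))
    · exact ((hgd).mul_left (-(2*n₁))).trans (dvd_of_eq (by simp [vec6_apply5]; try ring))
    · exact ((hgd).mul_left (-(-1))).trans (dvd_of_eq (by simp [vec6_apply5]; try ring))
    · exact ((hgd).mul_left (-(2*n₂))).trans (dvd_of_eq (by simp [vec6_apply5]; try ring))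
    · exact ((hgd).mul_left (-(-1))).trans (dvd_of_eq (by simp [vec6_apply5]; try ring))
    · simpa using dvd_zero g
    · exact ((hgd).mul_left (1-2*m₃)).trans (dvd_of_eq (by simp [vec6_apply5]; try ring))
    · exact ((hgd).mul_left (-(1))).trans (dvd_of_eq (by simp [vec6_apply5]; try ring))
    · exact ((hgd).mul_left (-(-2*n₁))).trans (dvd_of_eq (by simp [vec6_apply5]; try ring))
    · exact ((hgd).mul_left (-(1))).trans (dvd_of_eq (by simp [vec6_apply5]; try ring))
    · exact ((hgd).mul_left (-(-2*n₂))).trans (dvd_of_eq (by simp [vec6_apply5]; try ring))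
    · exact ((hgd).mul_left (-(1-2*m₃))).trans (dvd_of_eq (by simp [vec6_apply5]; try ring))
    · simpa using dvd_zero g
  have hlg : L ∣ g := by
    have dA : L ∣ 1 - 4*n₁^2 := by
      have h := Finset.gcd_dvd (Finset.mem_univ ((0 : Fin 6), (1 : Fin 6))) (f := fun p : Fin 6 × Fin 6 =>
        (!![1, -2*n₁, 1, -2*n₂, 1-2*m₃, 0; -2*n₁, 1, -2*n₂, 1, 0, 1-2*m₃] : Matrix (Fin 2) (Fin 6) ℤ) 0 p.1 *
        (!![1, -2*n₁, 1, -2*n₂, 1-2*m₃, 0; -2*n₁, 1, -2*n₂, 1, 0, 1-2*m₃] : Matrix (Fin 2) (Fin 6) ℤ) 1 p.2 -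
        (!![1, -2*n₁, 1, -2*n₂, 1-2*m₃, 0; -2*n₁, 1, -2*n₂, 1, 0, 1-2*m₃] : Matrix (Fin 2) (Fin 6) ℤ) 0 p.2 *
        (!![1, -2*n₁, 1, -2*n₂, 1-2*m₃, 0; -2*n₁, 1, -2*n₂, 1, 0, 1-2*m₃] : Matrix (Fin 2) (Fin 6) ℤ) 1 p.1)
      rw [← hL] at h
      exact h.trans (dvd_of_eq (by simp [vec6_apply5]; try ring))
    have dB : L ∣ 1 - 4*n₂^2 := by
      have h := Finset.gcd_dvd (Finset.mem_univ ((2 : Fin 6), (3 : Fin 6))) (f := fun p : Fin 6 × Fin 6 =>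
        (!![1, -2*n₁, 1, -2*n₂, 1-2*m₃, 0; -2*n₁, 1, -2*n₂, 1, 0, 1-2*m₃] : Matrix (Fin 2) (Fin 6) ℤ) 0 p.1 *
        (!![1, -2*n₁, 1, -2*n₂, 1-2*m₃, 0; -2*n₁, 1, -2*n₂, 1, 0, 1-2*m₃] : Matrix (Fin 2) (Fin 6) ℤ) 1 p.2 -
        (!![1, -2*n₁, 1, -2*n₂, 1-2*m₃, 0; -2*n₁, 1, -2*n₂, 1, 0, 1-2*m₃] : Matrix (Fin 2) (Fin 6) ℤ) 0 p.2 *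
        (!![1, -2*n₁, 1, -2*n₂, 1-2*m₃, 0; -2*n₁, 1, -2*n₂, 1, 0, 1-2*m₃] : Matrix (Fin 2) (Fin 6) ℤ) 1 p.1)
      rw [← hL] at h
      exact h.trans (dvd_of_eq (by simp [vec6_apply5]; try ring))
    have dC : L ∣ 1 - 4*n₁*n₂ := by
      have h := Finset.gcd_dvd (Finset.mem_univ ((0 : Fin 6), (3 : Fin 6))) (f := fun p : Fin 6 × Fin 6 =>
        (!![1, -2*n₁, 1, -2*n₂, 1-2*m₃, 0; -2*n₁, 1, -2*n₂, 1, 0, 1-2*m₃] : Matrix (Fin 2) (Fin 6) ℤ) 0 p.1 *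
        (!![1, -2*n₁, 1, -2*n₂, 1-2*m₃, 0; -2*n₁, 1, -2*n₂, 1, 0, 1-2*m₃] : Matrix (Fin 2) (Fin 6) ℤ) 1 p.2 -
        (!![1, -2*n₁, 1, -2*n₂, 1-2*m₃, 0; -2*n₁, 1, -2*n₂, 1, 0, 1-2*m₃] : Matrix (Fin 2) (Fin 6) ℤ) 0 p.2 *
        (!![1, -2*n₁, 1, -2*n₂, 1-2*m₃, 0; -2*n₁, 1, -2*n₂, 1, 0, 1-2*m₃] : Matrix (Fin 2) (Fin 6) ℤ) 1 p.1)
      rw [← hL] at h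
      exact h.trans (dvd_of_eq (by simp [vec6_apply5]; try ring))
    have dD : L ∣ 1 - 2*m₃ := by
      have h := Finset.gcd_dvd (Finset.mem_univ ((0 : Fin 6), (5 : Fin 6))) (f := fun p : Fin 6 × Fin 6 =>
        (!![1, -2*n₁, 1, -2*n₂, 1-2*m₃, 0; -2*n₁, 1, -2*n₂, 1, 0, 1-2*m₃] : Matrix (Fin 2) (Fin 6) ℤ) 0 p.1 *
        (!![1, -2*n₁, 1, -2*n₂, 1-2*m₃, 0; -2*n₁, 1, -2*n₂, 1, 0, 1-2*m₃] : Matrix (Fin 2) (Fin 6) ℤ) 1 p.2 -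
        (!![1, -2*n₁, 1, -2*n₂, 1-2*m₃, 0; -2*n₁, 1, -2*n₂, 1, 0, 1-2*m₃] : Matrix (Fin 2) (Fin 6) ℤ) 0 p.2 *
        (!![1, -2*n₁, 1, -2*n₂, 1-2*m₃, 0; -2*n₁, 1, -2*n₂, 1, 0, 1-2*m₃] : Matrix (Fin 2) (Fin 6) ℤ) 1 p.1)
      rw [← hL] at h
      exact h.trans (dvd_of_eq (by simp [vec6_apply5]; try ring))
    exact Int.dvd_coe_gcd dA (Int.dvd_coe_gcd dB (Int.dvd_coe_gcd dC dD))
  have hLnn : 0 ≤ L := by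
    rw [hL, ← Finset.normalize_gcd, ← Int.abs_eq_normalize]
    exact abs_nonneg _
  exact Int.dvd_antisymm hLnn (Int.natCast_nonneg _) hlg hgl
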